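/- arXiv:math/0602259 — 2 statements merged into one kernel-verified Lean document; each statement's English description precedes it below -/
import Mathlib

section
/- For every finite sequence w in {1,…,n} and every j ∈ {1,…,n}, the identity Y_{j;w} = (∏_{i=1}^n y_i^{b^w_{n+i,j}}) · ∏_{i=1}^n F_{i;w}^{b^w_{ij}} holds in ℚ(y₁,…,yₙ); here the first factor (determined by the bottom part of the extended matrix B̃_w) is the coefficient of the principal-coefficients pattern at w, i.e., the tropical evaluation of Y_{j;w}. -/
/-! Statement 3 (Fomin–Zelevinsky, "Cluster algebras IV", Proposition 3.13):
Y_{j;w} equals its tropical evaluation times ∏ F_{i;w}^{b^w_{ij}}. -/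
open scoped BigOperators

noncomputable section

/-- The ambient field `ℚ(x₁,…,xₙ,y₁,…,yₙ)`; the `x`-variables are indexed by
`Sum.inl`, the `y`-variables by `Sum.inr`. -/
abbrev ClusterField (n : ℕ) : Type :=
  FractionRing (MvPolynomial (Fin n ⊕ Fin n) ℚ)

/-- The variable `xᵢ` in the ambient field. -/
def xv (n : ℕ) (i : Fin n) : ClusterField n :=
  algebraMap (MvPolynomial (Fin n ⊕ Fin n) ℚ) (ClusterField n) (MvPolynomial.X (Sum.inl i))

/-- The variable `yⱼ` in the ambient field. -/
def yvF (n : ℕ) (j : Fin n) : ClusterField n :=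
  algebraMap (MvPolynomial (Fin n ⊕ Fin n) ℚ) (ClusterField n) (MvPolynomial.X (Sum.inr j))

/-- The initial `2n × n` extended exchange matrix: top part `B⁰`, bottom part the identity. -/
def initB {n : ℕ} (B0 : Matrix (Fin n) (Fin n) ℤ) :
    Matrix (Fin n ⊕ Fin n) (Fin n) ℤ :=
  Matrix.of fun i j =>
    match i with
    | Sum.inl i' => B0 i' j
    | Sum.inr i' => if i' = j then 1 else 0

/-- Mutation of the `2n × n` extended exchange matrix in direction `k`. -/
def matMut {n : ℕ} (B : Matrix (Fin n ⊕ Fin n) (Fin n) ℤ) (k : Fin n) :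
    Matrix (Fin n ⊕ Fin n) (Fin n) ℤ :=
  Matrix.of fun i j =>
    if i = Sum.inl k ∨ j = k then -B i j
    else B i j + Int.sign (B i k) * max (B i k * B (Sum.inl k) j) 0

/-- One exchange (mutation) step for the cluster variables, with principal coefficients. -/
def Xstep {n : ℕ} (B : Matrix (Fin n ⊕ Fin n) (Fin n) ℤ)
    (X : Fin n → ClusterField n) (k : Fin n) : Fin n → ClusterField n :=
  fun l =>
    if l = k then
      ((∏ j, yvF n j ^ (B (Sum.inr j) k).toNat) * (∏ i, X i ^ (B (Sum.inl i) k).toNat)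
          + (∏ j, yvF n j ^ (-(B (Sum.inr j) k)).toNat) *
              (∏ i, X i ^ (-(B (Sum.inl i) k)).toNat)) / X k
    else X l

/-- The labeled seed (extended matrix together with cluster) attached to the
mutation sequence `w`, for the pattern with principal coefficients. -/
def seed {n : ℕ} (B0 : Matrix (Fin n) (Fin n) ℤ) (w : List (Fin n)) :
    Matrix (Fin n ⊕ Fin n) (Fin n) ℤ × (Fin n → ClusterField n) :=
  w.foldl (fun p k => (matMut p.1 k, Xstep p.1 p.2 k)) (initB B0, fun l => xv n l)

/-- The extended exchange matrix `B̃_w`. -/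
def Bmat {n : ℕ} (B0 : Matrix (Fin n) (Fin n) ℤ) (w : List (Fin n)) :
    Matrix (Fin n ⊕ Fin n) (Fin n) ℤ := (seed B0 w).1

/-- The cluster variable `X_{ℓ;w}`. -/
def Xvar {n : ℕ} (B0 : Matrix (Fin n) (Fin n) ℤ) (w : List (Fin n)) :
    Fin n → ClusterField n := (seed B0 w).2

/-- The field `ℚ(y₁,…,yₙ)`. -/
abbrev YField (n : ℕ) : Type := FractionRing (MvPolynomial (Fin n) ℚ)

/-- The variable `yⱼ` in `ℚ(y₁,…,yₙ)`. -/
def yv (n : ℕ) (j : Fin n) : YField n :=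
  algebraMap (MvPolynomial (Fin n) ℚ) (YField n) (MvPolynomial.X j)

/-- The exchange step at `x₁ = ⋯ = xₙ = 1`: the recursion for the `F`-polynomials. -/
def Fstep {n : ℕ} (B : Matrix (Fin n ⊕ Fin n) (Fin n) ℤ)
    (F : Fin n → YField n) (k : Fin n) : Fin n → YField n :=
  fun l =>
    if l = k then
      ((∏ j, yv n j ^ (B (Sum.inr j) k).toNat) * (∏ i, F i ^ (B (Sum.inl i) k).toNat)
          + (∏ j, yv n j ^ (-(B (Sum.inr j) k)).toNat) *
              (∏ i, F i ^ (-(B (Sum.inl i) k)).toNat)) / F k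
    else F l

/-- The seed of the pattern specialized at `x₁ = ⋯ = xₙ = 1`. -/
def Fseed {n : ℕ} (B0 : Matrix (Fin n) (Fin n) ℤ) (w : List (Fin n)) :
    Matrix (Fin n ⊕ Fin n) (Fin n) ℤ × (Fin n → YField n) :=
  w.foldl (fun p k => (matMut p.1 k, Fstep p.1 p.2 k)) (initB B0, fun _ => 1)

/-- The `F`-polynomial `F_{ℓ;w}`, i.e. the image of `X_{ℓ;w}` under the
specialization `x₁ = ⋯ = xₙ = 1`. -/
def Fpoly {n : ℕ} (B0 : Matrix (Fin n) (Fin n) ℤ) (w : List (Fin n)) :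
    Fin n → YField n := (Fseed B0 w).2


/-- One `Y`-seed mutation step in `ℚ(y₁,…,yₙ)` (using the top part of the matrix). -/
def Ystep {n : ℕ} (B : Matrix (Fin n ⊕ Fin n) (Fin n) ℤ)
    (Y : Fin n → YField n) (k : Fin n) : Fin n → YField n :=
  fun j =>
    if j = k then (Y k)⁻¹
    else Y j * Y k ^ (B (Sum.inl k) j).toNat * (Y k + 1) ^ (-(B (Sum.inl k) j))

/-- The `Y`-pattern seed attached to `w`, with initial `Y`-seed `((y₁,…,yₙ), B⁰)`. -/
def Yseed {n : ℕ} (B0 : Matrix (Fin n) (Fin n) ℤ) (w : List (Fin n)) :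
    Matrix (Fin n ⊕ Fin n) (Fin n) ℤ × (Fin n → YField n) :=
  w.foldl (fun p k => (matMut p.1 k, Ystep p.1 p.2 k)) (initB B0, yv n)

/-- The rational function `Y_{j;w} ∈ ℚ(y₁,…,yₙ)`. -/
def Yfun {n : ℕ} (B0 : Matrix (Fin n) (Fin n) ℤ) (w : List (Fin n)) :
    Fin n → YField n := (Yseed B0 w).2


/-! ### Auxiliary integer lemmas -/

lemma int_key (a b : ℤ) :
    a.sign * max (a * b) 0 = max a 0 * max b 0 - max (-a) 0 * max (-b) 0 := by
  rcases lt_trichotomy a 0 with ha | ha | ha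
  · rcases le_or_gt b 0 with hb | hb
    · rw [Int.sign_eq_neg_one_of_neg ha, max_eq_left (mul_nonneg_of_nonpos_of_nonpos ha.le hb),
        max_eq_right ha.le, max_eq_left (neg_nonneg.2 ha.le), max_eq_left (neg_nonneg.2 hb)]
      ring
    · rw [Int.sign_eq_neg_one_of_neg ha, max_eq_right (mul_nonpos_of_nonpos_of_nonneg ha.le hb.le),
        max_eq_right ha.le, max_eq_right (neg_nonpos_of_nonneg hb.le)]
      ring
  · simp [ha]
  · rcases le_or_gt b 0 with hb | hb
    · rw [Int.sign_eq_one_of_pos ha, max_eq_right (mul_nonpos_of_nonneg_of_nonpos ha.le hb),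
        max_eq_right hb, max_eq_right (neg_nonpos_of_nonneg ha.le)]
      ring
    · rw [Int.sign_eq_one_of_pos ha, max_eq_left (mul_nonneg ha.le hb.le),
        max_eq_left ha.le, max_eq_left hb.le, max_eq_right (neg_nonpos_of_nonneg ha.le),
        max_eq_right (neg_nonpos_of_nonneg hb.le)]
      ring

lemma posmul_max (e x : ℤ) (he : 0 < e) : e * max x 0 = max (e * x) 0 := by
  rw [mul_max_of_nonneg _ _ he.le, mul_zero]

lemma m_helper (e f x y : ℤ) (he : 0 < e) (hf : 0 < f) (h : e * x = -(f * y)) :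
    e * max x 0 = f * max (-y) 0 := by
  rw [posmul_max _ _ he, posmul_max _ _ hf, h, mul_neg]

lemma zpow_split {G₀ : Type*} [GroupWithZero G₀] (a : G₀) (e : ℤ) :
    a ^ e = a ^ e.toNat / a ^ (-e).toNat := by
  rcases le_or_gt 0 e with h | h
  · rw [Int.toNat_eq_zero.2 (by omega : -e ≤ 0), pow_zero, div_one, ← zpow_natCast,
      Int.toNat_of_nonneg h]
  · rw [Int.toNat_eq_zero.2 h.le, pow_zero, ← zpow_natCast, Int.toNat_of_nonneg (by omega),
      one_div, ← zpow_neg, neg_neg]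

lemma combine {K : Type*} [Field K] (Yj Pv Mv aK : K) (hM : Mv ≠ 0)
    (haK : aK ≠ 0) (p m : ℕ) (b : ℤ) (hb : (p : ℤ) - m = b) :
    Yj * (Pv / Mv) ^ p * ((Pv + Mv) / Mv) ^ (-b) =
      ((Pv + Mv) / aK) ^ (-b) * (Yj / aK ^ b * Pv ^ p / Mv ^ m) := by
  rw [show ((-b) : ℤ) = (m : ℤ) - p by omega]
  rw [div_zpow, div_zpow, div_pow]
  have h3 : Mv ^ ((m : ℤ) - p) = Mv ^ m / Mv ^ p := by
    rw [zpow_sub₀ hM, zpow_natCast, zpow_natCast]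
  have h4 : aK ^ ((m : ℤ) - p) = (aK ^ b)⁻¹ := by
    rw [show (m : ℤ) - p = -b by omega, zpow_neg]
  rw [h3, h4]
  have hMm : Mv ^ m ≠ 0 := pow_ne_zero _ hM
  have hMp : Mv ^ p ≠ 0 := pow_ne_zero _ hM
  have hab : aK ^ b ≠ 0 := zpow_ne_zero _ haK
  field_simp

/-! ### The positivity cone in `ℚ(y)` -/

/-- elements of `ℚ(y)` that are ratios of nonzero polynomials with nonneg coefficients -/
def PosY {n : ℕ} (z : YField n) : Prop :=
  ∃ p q : MvPolynomial (Fin n) ℚ,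
    (∀ m, 0 ≤ p.coeff m) ∧ p ≠ 0 ∧ (∀ m, 0 ≤ q.coeff m) ∧ q ≠ 0 ∧
      z = algebraMap (MvPolynomial (Fin n) ℚ) (YField n) p /
          algebraMap (MvPolynomial (Fin n) ℚ) (YField n) q

namespace PosY
variable {n : ℕ} {z w : YField n}

lemma map_ne_zero {p : MvPolynomial (Fin n) ℚ} (hp : p ≠ 0) :
    algebraMap (MvPolynomial (Fin n) ℚ) (YField n) p ≠ 0 := by
  simpa using (IsFractionRing.to_map_eq_zero_iff (K := YField n)).not.2 hp

lemma ne_zero (h : PosY z) : z ≠ 0 := by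
  obtain ⟨p, q, _, hp, _, hq, rfl⟩ := h
  exact div_ne_zero (map_ne_zero hp) (map_ne_zero hq)

lemma one : PosY (1 : YField n) :=
  ⟨1, 1, by simp [MvPolynomial.coeff_one]; intro m; positivity, one_ne_zero,
    by simp [MvPolynomial.coeff_one]; intro m; positivity, one_ne_zero, by simp⟩

lemma yv_pos (j : Fin n) : PosY (yv n j) :=
  ⟨MvPolynomial.X j, 1, by intro m; simp [MvPolynomial.coeff_X']; positivity,
    MvPolynomial.X_ne_zero j,
    by intro m; simp [MvPolynomial.coeff_one]; positivity, one_ne_zero, by simp [yv]⟩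

lemma mul (h : PosY z) (h' : PosY w) : PosY (z * w) := by
  obtain ⟨p, q, hp0, hp, hq0, hq, rfl⟩ := h
  obtain ⟨p', q', hp0', hp', hq0', hq', rfl⟩ := h'
  refine ⟨p * p', q * q', ?_, mul_ne_zero hp hp', ?_, mul_ne_zero hq hq', ?_⟩
  · intro m
    rw [MvPolynomial.coeff_mul]
    exact Finset.sum_nonneg fun x _ => mul_nonneg (hp0 _) (hp0' _)
  · intro m
    rw [MvPolynomial.coeff_mul]
    exact Finset.sum_nonneg fun x _ => mul_nonneg (hq0 _) (hq0' _)
  · rw [map_mul, map_mul]; ring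

lemma inv (h : PosY z) : PosY z⁻¹ := by
  obtain ⟨p, q, hp0, hp, hq0, hq, rfl⟩ := h
  exact ⟨q, p, hq0, hq, hp0, hp, by rw [inv_div]⟩

lemma add (h : PosY z) (h' : PosY w) : PosY (z + w) := by
  obtain ⟨p, q, hp0, hp, hq0, hq, rfl⟩ := h
  obtain ⟨p', q', hp0', hp', hq0', hq', rfl⟩ := h'
  have hnum : ∀ m, 0 ≤ (p * q' + p' * q).coeff m := by
    intro m
    rw [MvPolynomial.coeff_add, MvPolynomial.coeff_mul, MvPolynomial.coeff_mul]
    have := Finset.sum_nonneg (s := Finset.HasAntidiagonal.antidiagonal m)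
      fun x _ => mul_nonneg (hp0 x.1) (hq0' x.2)
    have := Finset.sum_nonneg (s := Finset.HasAntidiagonal.antidiagonal m)
      fun x _ => mul_nonneg (hp0' x.1) (hq0 x.2)
    linarith
  have hnum0 : p * q' + p' * q ≠ 0 := by
    obtain ⟨m, hm⟩ := MvPolynomial.ne_zero_iff.1 (mul_ne_zero hp hq')
    intro hc
    have h1 : 0 < (p * q').coeff m := lt_of_le_of_ne
      (by rw [MvPolynomial.coeff_mul]
          exact Finset.sum_nonneg fun x _ => mul_nonneg (hp0 _) (hq0' _))
      (Ne.symm hm)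
    have h2 : 0 ≤ (p' * q).coeff m := by
      rw [MvPolynomial.coeff_mul]
      exact Finset.sum_nonneg fun x _ => mul_nonneg (hp0' _) (hq0 _)
    have := congrArg (MvPolynomial.coeff m) hc
    rw [MvPolynomial.coeff_add, MvPolynomial.coeff_zero] at this
    linarith
  refine ⟨p * q' + p' * q, q * q', hnum, hnum0, ?_, mul_ne_zero hq hq', ?_⟩
  · intro m
    rw [MvPolynomial.coeff_mul]
    exact Finset.sum_nonneg fun x _ => mul_nonneg (hq0 _) (hq0' _)
  · rw [div_add_div _ _ (map_ne_zero hq) (map_ne_zero hq')]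
    simp only [map_add, map_mul]
    ring

lemma div (h : PosY z) (h' : PosY w) : PosY (z / w) := by
  rw [div_eq_mul_inv]; exact h.mul h'.inv

lemma pow (h : PosY z) (m : ℕ) : PosY (z ^ m) := by
  induction m with
  | zero => simpa using one
  | succ m ih => rw [pow_succ]; exact ih.mul h

lemma prod {ι : Type*} (s : Finset ι) (f : ι → YField n) (h : ∀ i ∈ s, PosY (f i)) :
    PosY (∏ i ∈ s, f i) :=
  Finset.prod_induction f PosY (fun _ _ => PosY.mul) PosY.one h

end PosY

/-! ### Bookkeeping for the foldl-defined seeds -/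

lemma foldl_fst {A X K : Type*} (g : A → K → A) (h : A → X → K → X) :
    ∀ (w : List K) (a : A) (x : X),
      (w.foldl (fun p k => (g p.1 k, h p.1 p.2 k)) (a, x)).1 = w.foldl g a
  | [], _, _ => rfl
  | k :: w, a, x => by
      simp only [List.foldl_cons]
      exact foldl_fst g h w (g a k) (h a x k)

lemma Bmat_eq {n : ℕ} (B0 : Matrix (Fin n) (Fin n) ℤ) (w : List (Fin n)) :
    Bmat B0 w = w.foldl matMut (initB B0) :=
  foldl_fst matMut Xstep w (initB B0) _

lemma Fseed_fst {n : ℕ} (B0 : Matrix (Fin n) (Fin n) ℤ) (w : List (Fin n)) :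
    (Fseed B0 w).1 = Bmat B0 w := by
  rw [Bmat_eq]; exact foldl_fst matMut Fstep w (initB B0) _

lemma Yseed_fst {n : ℕ} (B0 : Matrix (Fin n) (Fin n) ℤ) (w : List (Fin n)) :
    (Yseed B0 w).1 = Bmat B0 w := by
  rw [Bmat_eq]; exact foldl_fst matMut Ystep w (initB B0) _

lemma Bmat_concat {n : ℕ} (B0 : Matrix (Fin n) (Fin n) ℤ) (w : List (Fin n)) (k : Fin n) :
    Bmat B0 (w ++ [k]) = matMut (Bmat B0 w) k := by
  rw [Bmat_eq, Bmat_eq, List.foldl_append]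
  rfl

lemma Fpoly_concat {n : ℕ} (B0 : Matrix (Fin n) (Fin n) ℤ) (w : List (Fin n)) (k : Fin n) :
    Fpoly B0 (w ++ [k]) = Fstep (Bmat B0 w) (Fpoly B0 w) k := by
  have : Fseed B0 (w ++ [k])
      = (matMut (Fseed B0 w).1 k, Fstep (Fseed B0 w).1 (Fseed B0 w).2 k) := by
    rw [Fseed, Fseed, List.foldl_append]
    rfl
  rw [Fpoly, this, Fseed_fst]
  rfl

lemma Yfun_concat {n : ℕ} (B0 : Matrix (Fin n) (Fin n) ℤ) (w : List (Fin n)) (k : Fin n) :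
    Yfun B0 (w ++ [k]) = Ystep (Bmat B0 w) (Yfun B0 w) k := by
  have : Yseed B0 (w ++ [k])
      = (matMut (Yseed B0 w).1 k, Ystep (Yseed B0 w).1 (Yseed B0 w).2 k) := by
    rw [Yseed, Yseed, List.foldl_append]
    rfl
  rw [Yfun, this, Yseed_fst]
  rfl

/-! ### Skew-symmetrizability is preserved by mutation -/

lemma skew_mut {n : ℕ} (d : Fin n → ℤ) (hd : ∀ i, 0 < d i)
    (B : Matrix (Fin n ⊕ Fin n) (Fin n) ℤ)
    (hs : ∀ i j, d i * B (Sum.inl i) j = -(d j * B (Sum.inl j) i)) (k i j : Fin n) :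
    d i * matMut B k (Sum.inl i) j = -(d j * matMut B k (Sum.inl j) i) := by
  simp only [matMut, Matrix.of_apply]
  by_cases hik : i = k
  · subst hik
    simp only [eq_self_iff_true, true_or, or_true, if_true]
    linear_combination - hs i j
  · by_cases hjk : j = k
    · subst hjk
      simp only [eq_self_iff_true, true_or, or_true, if_true]
      linear_combination - hs i j
    · have hii : ¬((Sum.inl i : Fin n ⊕ Fin n) = Sum.inl k ∨ j = k) := by
        simp [hik, hjk]
      have hjj : ¬((Sum.inl j : Fin n ⊕ Fin n) = Sum.inl k ∨ i = k) := by
        simp [hik, hjk]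
      rw [if_neg hii, if_neg hjj, int_key, int_key]
      have m1 : d i * max (B (Sum.inl i) k) 0 = d k * max (-(B (Sum.inl k) i)) 0 :=
        m_helper _ _ _ _ (hd i) (hd k) (hs i k)
      have m2 : d i * max (-(B (Sum.inl i) k)) 0 = d k * max (B (Sum.inl k) i) 0 := by
        have := m_helper (d i) (d k) (-(B (Sum.inl i) k)) (-(B (Sum.inl k) i))
          (hd i) (hd k) (by linear_combination - hs i k)
        simpa using this
      have m3 : d j * max (B (Sum.inl j) k) 0 = d k * max (-(B (Sum.inl k) j)) 0 :=
        m_helper _ _ _ _ (hd j) (hd k) (hs j k)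
      have m4 : d j * max (-(B (Sum.inl j) k)) 0 = d k * max (B (Sum.inl k) j) 0 := by
        have := m_helper (d j) (d k) (-(B (Sum.inl j) k)) (-(B (Sum.inl k) j))
          (hd j) (hd k) (by linear_combination - hs j k)
        simpa using this
      apply mul_left_cancel₀ (show (d k : ℤ) ≠ 0 from (hd k).ne')
      linear_combination (d k) * hs i j + (d k * max (B (Sum.inl k) j) 0) * m1
        - (d k * max (-(B (Sum.inl k) j)) 0) * m2
        + (d k * max (B (Sum.inl k) i) 0) * m3
        - (d k * max (-(B (Sum.inl k) i)) 0) * m4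

/-! ### The main induction -/

lemma mainInd {n : ℕ} (B0 : Matrix (Fin n) (Fin n) ℤ) (d : Fin n → ℤ) (hd : ∀ i, 0 < d i)
    (hskew : ∀ i j, d i * B0 i j = -(d j * B0 j i)) (w : List (Fin n)) :
    (∀ i j, d i * Bmat B0 w (Sum.inl i) j = -(d j * Bmat B0 w (Sum.inl j) i)) ∧
    (∀ i, PosY (Fpoly B0 w i)) ∧
    (∀ j, Yfun B0 w j
      = ∏ i, Sum.elim (Fpoly B0 w) (yv n) i ^ (Bmat B0 w i j)) := by
  induction w using List.reverseRecOn with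
  | nil =>
      refine ⟨?_, ?_, ?_⟩
      · intro i j
        simpa [Bmat, seed, initB] using hskew i j
      · intro i
        simpa [Fpoly, Fseed] using PosY.one
      · intro j
        show yv n j = _
        rw [Fintype.prod_sum_type]
        simp only [Sum.elim_inl, Sum.elim_inr, Bmat, seed, List.foldl_nil, initB,
          Matrix.of_apply, Fpoly, Fseed, one_zpow, Finset.prod_const_one, one_mul]
        rw [Finset.prod_eq_single j (fun i _ hij => by rw [if_neg hij, zpow_zero])
          (fun h => absurd (Finset.mem_univ j) h)]
        rw [if_pos rfl, zpow_one]
  | append_singleton w k ih =>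
      obtain ⟨hsw, hFw, hYw⟩ := ih
      have hkk : Bmat B0 w (Sum.inl k) k = 0 := by
        have h1 : d k * Bmat B0 w (Sum.inl k) k = 0 := by linarith [hsw k k]
        rcases mul_eq_zero.1 h1 with h | h
        · exact absurd h (hd k).ne'
        · exact h
      set B := Bmat B0 w with hBdef
      set F := Fpoly B0 w with hFdef
      set Y := Yfun B0 w with hYdef
      set a : Fin n ⊕ Fin n → YField n := Sum.elim F (yv n) with hadef
      have ha : ∀ i, PosY (a i) := by rintro (i | i); exacts [hFw i, PosY.yv_pos i]
      have ha0 : ∀ i, a i ≠ 0 := fun i => (ha i).ne_zero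
      set P : YField n := ∏ i, a i ^ (B i k).toNat with hPdef
      set M : YField n := ∏ i, a i ^ (-(B i k)).toNat with hMdef
      have hP : PosY P := PosY.prod _ _ fun i _ => (ha i).pow _
      have hM : PosY M := PosY.prod _ _ fun i _ => (ha i).pow _
      have hQ : PosY (P + M) := hP.add hM
      have hM0 : M ≠ 0 := hM.ne_zero
      have hFk0 : F k ≠ 0 := (hFw k).ne_zero
      have hPs : P = (∏ jj, yv n jj ^ (B (Sum.inr jj) k).toNat)
          * ∏ i, F i ^ (B (Sum.inl i) k).toNat := by
        rw [hPdef, Fintype.prod_sum_type]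
        simp only [hadef, Sum.elim_inl, Sum.elim_inr]
        ring
      have hMs : M = (∏ jj, yv n jj ^ (-(B (Sum.inr jj) k)).toNat)
          * ∏ i, F i ^ (-(B (Sum.inl i) k)).toNat := by
        rw [hMdef, Fintype.prod_sum_type]
        simp only [hadef, Sum.elim_inl, Sum.elim_inr]
        ring
      have hFk' : Fstep B F k k = (P + M) / F k := by
        simp only [Fstep, eq_self_iff_true, if_true]
        rw [hPs, hMs]
      have hYk : Y k = P / M := by
        calc Y k = ∏ i, (a i ^ (B i k).toNat / a i ^ (-(B i k)).toNat) := by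
              rw [hYw k]
              exact Finset.prod_congr rfl fun i _ => zpow_split _ _
          _ = P / M := Finset.prod_div_distrib _ _
      have ha' : ∀ i : Fin n ⊕ Fin n, i ≠ Sum.inl k →
          Sum.elim (Fstep B F k) (yv n) i = a i := by
        rintro (i | i) hi
        · have : i ≠ k := fun h => hi (by rw [h])
          simp [Fstep, this, hadef]
        · rfl
      refine ⟨?_, ?_, ?_⟩
      · intro i j
        rw [Bmat_concat]
        exact skew_mut d hd B hsw k i j
      · intro i
        rw [Fpoly_concat]
        by_cases hik : i = k
        · subst hik
          rw [hFk']
          exact (hP.add hM).div (hFw i)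
        · simpa [Fstep, hik] using hFw i
      · intro j
        rw [Yfun_concat, Bmat_concat, Fpoly_concat]
        by_cases hjk : j = k
        · subst hjk
          simp only [Ystep, eq_self_iff_true, if_true]
          have hcol : ∀ i : Fin n ⊕ Fin n,
              Sum.elim (Fstep B F j) (yv n) i ^ (matMut B j i j)
                = (a i ^ (B i j))⁻¹ := by
            intro i
            have hE : matMut B j i j = -(B i j) := by simp [matMut]
            rw [hE]
            by_cases hi : i = Sum.inl j
            · subst hi
              rw [show B (Sum.inl j) j = 0 from hkk]
              simp
            · rw [ha' i hi, zpow_neg]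
          rw [Finset.prod_congr rfl fun i _ => hcol i, Finset.prod_inv_distrib, ← hYw j]
        · simp only [Ystep, if_neg hjk]
          set b : ℤ := B (Sum.inl k) j with hbdef
          set p : ℕ := b.toNat with hpdef
          set m : ℕ := (-b).toNat with hmdef
          have hYk1 : Y k + 1 = (P + M) / M := by
            rw [hYk, div_add_one hM0]
          -- right-hand side computation
          have hEK : matMut B k (Sum.inl k) j = -b := by simp [matMut, hbdef]
          have hfac : ∀ i ∈ Finset.univ.erase (Sum.inl k : Fin n ⊕ Fin n),
              Sum.elim (Fstep B F k) (yv n) i ^ (matMut B k i j)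
                = a i ^ (B i j) * (a i ^ (B i k).toNat) ^ p
                    / (a i ^ (-(B i k)).toNat) ^ m := by
            intro i hi
            have hiK : i ≠ Sum.inl k := Finset.ne_of_mem_erase hi
            have hE : matMut B k i j
                = B i j + (((B i k).toNat * p : ℕ) : ℤ) - (((-(B i k)).toNat * m : ℕ) : ℤ) := by
              simp only [matMut, Matrix.of_apply, if_neg (not_or.2 ⟨hiK, hjk⟩)]
              rw [int_key, hpdef, hmdef, hbdef]
              push_cast [Int.toNat_eq_max]
              ring
            rw [ha' i hiK, hE, zpow_sub₀ (ha0 i), zpow_add₀ (ha0 i), zpow_natCast,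
              zpow_natCast, pow_mul, pow_mul]
          have e1 : (∏ i ∈ Finset.univ.erase (Sum.inl k : Fin n ⊕ Fin n), a i ^ (B i j))
              = Y j / a (Sum.inl k) ^ b := by
            rw [eq_div_iff (zpow_ne_zero _ (ha0 _)), hYw j]
            exact Finset.prod_erase_mul _ _ (Finset.mem_univ _)
          have e2 : (∏ i ∈ Finset.univ.erase (Sum.inl k : Fin n ⊕ Fin n),
              a i ^ (B i k).toNat) = P :=
            Finset.prod_erase _ (by rw [hkk]; simp)
          have e3 : (∏ i ∈ Finset.univ.erase (Sum.inl k : Fin n ⊕ Fin n),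
              a i ^ (-(B i k)).toNat) = M :=
            Finset.prod_erase _ (by rw [hkk]; simp)
          rw [← Finset.mul_prod_erase Finset.univ _
            (Finset.mem_univ (Sum.inl k : Fin n ⊕ Fin n))]
          rw [Finset.prod_congr rfl hfac, Finset.prod_div_distrib, Finset.prod_mul_distrib,
            Finset.prod_pow, Finset.prod_pow, e1, e2, e3, hEK]
          have haK : a (Sum.inl k) = F k := rfl
          rw [show Sum.elim (Fstep B F k) (yv n) (Sum.inl k) = (P + M) / F k from hFk', haK]
          show Y j * Y k ^ p * (Y k + 1) ^ (-b)
            = ((P + M) / F k) ^ (-b) * (Y j / F k ^ b * P ^ p / M ^ m)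
          rw [hYk1, hYk]
          exact combine (Y j) P M (F k) hM0 hFk0 p m b (by omega)


/-- `Y_{j;w} = (∏ᵢ yᵢ^{b^w_{n+i,j}}) ⬝ ∏ᵢ F_{i;w}^{b^w_{ij}}`;
the first factor is the coefficient of the principal-coefficients pattern at `w`
(the tropical evaluation of `Y_{j;w}`). -/
theorem Y_eq_tropical_mul_prod_F (n : ℕ) (hn : 1 ≤ n)
    (B0 : Matrix (Fin n) (Fin n) ℤ)
    (d : Fin n → ℤ) (hd : ∀ i, 0 < d i)
    (hskew : ∀ i j, d i * B0 i j = -(d j * B0 j i)) :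
    ∀ (w : List (Fin n)) (j : Fin n),
      Yfun B0 w j =
        (∏ i, yv n i ^ (Bmat B0 w (Sum.inr i) j)) *
          ∏ i, Fpoly B0 w i ^ (Bmat B0 w (Sum.inl i) j) := by
  intro w j
  rw [(mainInd B0 d hd hskew w).2.2 j, Fintype.prod_sum_type]
  simp only [Sum.elim_inl, Sum.elim_inr]
  ring

end
end

section
/- For every finite sequence w and every ℓ ∈ {1,…,n}, there exists a unique vector g = (g₁,…,gₙ) ∈ ℤⁿ such that X_{ℓ;w}(x₁,…,xₙ; y₁,…,yₙ) = x₁^{g₁} ⋯ xₙ^{gₙ} · F_{ℓ;w}(ŷ₁,…,ŷₙ), where ŷ_j = y_j · ∏_{i=1}^n x_i^{b⁰_{ij}} ∈ ℚ(x₁,…,xₙ,y₁,…,yₙ). Equivalently, every X_{ℓ;w} is homogeneous with respect to the ℤⁿ-grading of ℤ[x₁^{±1},…,xₙ^{±1}; y₁,…,yₙ] determined by deg(x_i) = α_i and deg(y_j) = −∑_{i=1}^n b⁰_{ij} α_i (where α₁,…,αₙ is the standard basis of ℤⁿ), and g is its degree (the g-vector g_{ℓ;w}). -/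
/-! Statement 6 (Fomin–Zelevinsky, "Cluster algebras IV", Proposition 6.1 and
Corollary 6.3): every cluster variable with principal coefficients is homogeneous;
equivalently X_{ℓ;w} = x^g · F_{ℓ;w}(ŷ₁,…,ŷₙ) for a unique g ∈ ℤⁿ (the g-vector). -/
open scoped BigOperators

noncomputable section

/-- The element `ŷ_j = y_j ∏ᵢ x_i^{b⁰_{ij}}` of the ambient field. -/
def yhat {n : ℕ} (B0 : Matrix (Fin n) (Fin n) ℤ) (j : Fin n) : ClusterField n :=
  yvF n j * ∏ i, xv n i ^ (B0 i j)

/-- One step of the recursion computing the evaluations `F_{ℓ;w}(ŷ₁,…,ŷₙ)`: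
the `F`-polynomial recursion with `yⱼ` replaced by `ŷⱼ`. -/
def FhatStep {n : ℕ} (B0 : Matrix (Fin n) (Fin n) ℤ)
    (B : Matrix (Fin n ⊕ Fin n) (Fin n) ℤ)
    (F : Fin n → ClusterField n) (k : Fin n) : Fin n → ClusterField n :=
  fun l =>
    if l = k then
      ((∏ j, yhat B0 j ^ (B (Sum.inr j) k).toNat) * (∏ i, F i ^ (B (Sum.inl i) k).toNat)
          + (∏ j, yhat B0 j ^ (-(B (Sum.inr j) k)).toNat) *
              (∏ i, F i ^ (-(B (Sum.inl i) k)).toNat)) / F k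
    else F l

/-- The evaluation `F_{ℓ;w}(ŷ₁,…,ŷₙ) ∈ ℚ(x₁,…,xₙ,y₁,…,yₙ)` of the
`F`-polynomial at `ŷ₁,…,ŷₙ`. -/
def Fhat {n : ℕ} (B0 : Matrix (Fin n) (Fin n) ℤ) (w : List (Fin n)) :
    Fin n → ClusterField n :=
  (w.foldl (fun p k => (matMut p.1 k, FhatStep B0 p.1 p.2 k))
    (initB B0, fun _ => 1)).2


/-! ### Auxiliary machinery -/

section Aux

variable {n : ℕ}

lemma amap_inj : Function.Injective (algebraMap (MvPolynomial (Fin n ⊕ Fin n) ℚ) (ClusterField n)) :=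
  IsFractionRing.injective _ _

lemma amap_ne_zero {p : MvPolynomial (Fin n ⊕ Fin n) ℚ} (h : p ≠ 0) :
    algebraMap (MvPolynomial (Fin n ⊕ Fin n) ℚ) (ClusterField n) p ≠ 0 :=
  (map_ne_zero_iff _ amap_inj).mpr h

lemma xv_ne_zero (i : Fin n) : xv n i ≠ 0 := amap_ne_zero (MvPolynomial.X_ne_zero _)

def xpow (g : Fin n → ℤ) : ClusterField n := ∏ i, xv n i ^ g i

lemma xpow_ne_zero (g : Fin n → ℤ) : xpow g ≠ 0 :=
  Finset.prod_ne_zero_iff.mpr fun i _ => zpow_ne_zero _ (xv_ne_zero i)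

lemma xpow_funadd (g h : Fin n → ℤ) : xpow (fun m => g m + h m) = xpow g * xpow h := by
  rw [xpow, xpow, xpow, ← Finset.prod_mul_distrib]
  exact Finset.prod_congr rfl fun i _ => zpow_add₀ (xv_ne_zero i) _ _

lemma xpow_funsub (g h : Fin n → ℤ) : xpow (fun m => g m - h m) = xpow g / xpow h := by
  rw [xpow, xpow, xpow, ← Finset.prod_div_distrib]
  exact Finset.prod_congr rfl fun i _ => zpow_sub₀ (xv_ne_zero i) _ _

lemma zpow_sum' {F : Type*} [Field F] {x : F} (h : x ≠ 0) {ι : Type*} (s : Finset ι) (f : ι → ℤ) :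
    x ^ (∑ i ∈ s, f i) = ∏ i ∈ s, x ^ f i := by
  classical
  induction s using Finset.induction with
  | empty => simp
  | insert _ _ hni ih => rw [Finset.sum_insert hni, Finset.prod_insert hni, zpow_add₀ h, ih]

lemma xpow_sum {ι : Type*} (s : Finset ι) (f : ι → Fin n → ℤ) :
    xpow (fun m => ∑ i ∈ s, f i m) = ∏ i ∈ s, xpow (f i) := by
  rw [xpow]
  rw [show (∏ i : Fin n, xv n i ^ ∑ j ∈ s, f j i) = ∏ i : Fin n, ∏ j ∈ s, xv n i ^ f j i from
    Finset.prod_congr rfl fun i _ => zpow_sum' (xv_ne_zero i) s _, Finset.prod_comm]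
  rfl

lemma xpow_pow (g : Fin n → ℤ) (e : ℕ) : xpow g ^ e = xpow (fun m => (e : ℤ) * g m) := by
  rw [xpow, xpow, ← Finset.prod_pow]
  refine Finset.prod_congr rfl fun i _ => ?_
  rw [← zpow_natCast (xv n i ^ g i) e, ← zpow_mul, mul_comm]

/-! ### Nonnegative polynomials and positive field elements -/

def NN (p : MvPolynomial (Fin n ⊕ Fin n) ℚ) : Prop := ∀ m, 0 ≤ p.coeff m

lemma NN.one : NN (1 : MvPolynomial (Fin n ⊕ Fin n) ℚ) := by
  intro m; rw [MvPolynomial.coeff_one]; split <;> norm_num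

lemma NN.X (i : Fin n ⊕ Fin n) : NN (MvPolynomial.X i : MvPolynomial (Fin n ⊕ Fin n) ℚ) := by
  intro m; rw [MvPolynomial.coeff_X']; split <;> norm_num

lemma NN.add {p q : MvPolynomial (Fin n ⊕ Fin n) ℚ} (hp : NN p) (hq : NN q) : NN (p + q) := by
  intro m; rw [MvPolynomial.coeff_add]; exact add_nonneg (hp m) (hq m)

lemma NN.mul {p q : MvPolynomial (Fin n ⊕ Fin n) ℚ} (hp : NN p) (hq : NN q) : NN (p * q) := by
  intro m; rw [MvPolynomial.coeff_mul]
  exact Finset.sum_nonneg fun x _ => mul_nonneg (hp _) (hq _)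

lemma NN.add_ne_zero {p q : MvPolynomial (Fin n ⊕ Fin n) ℚ} (hp : NN p) (hq : NN q)
    (hp0 : p ≠ 0) : p + q ≠ 0 := by
  obtain ⟨m, hm⟩ := MvPolynomial.ne_zero_iff.mp hp0
  have h1 : 0 < p.coeff m := lt_of_le_of_ne (hp m) (Ne.symm hm)
  intro h
  have h2 : (p + q).coeff m = 0 := by rw [h]; simp
  rw [MvPolynomial.coeff_add] at h2
  have := hq m
  linarith

def Pos (a : ClusterField n) : Prop :=
  ∃ p q : MvPolynomial (Fin n ⊕ Fin n) ℚ, NN p ∧ NN q ∧ p ≠ 0 ∧ q ≠ 0 ∧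
    a = algebraMap _ (ClusterField n) p / algebraMap _ _ q

lemma Pos.ne_zero {a : ClusterField n} (h : Pos a) : a ≠ 0 := by
  obtain ⟨p, q, _, _, hp0, hq0, rfl⟩ := h
  exact div_ne_zero (amap_ne_zero hp0) (amap_ne_zero hq0)

lemma Pos.one : Pos (1 : ClusterField n) :=
  ⟨1, 1, NN.one, NN.one, one_ne_zero, one_ne_zero, by simp⟩

lemma Pos.xv (i : Fin n) : Pos (xv n i) :=
  ⟨MvPolynomial.X (Sum.inl i), 1, NN.X _, NN.one, MvPolynomial.X_ne_zero _, one_ne_zero, by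
    simp [_root_.xv]⟩

lemma Pos.yvF (j : Fin n) : Pos (yvF n j) :=
  ⟨MvPolynomial.X (Sum.inr j), 1, NN.X _, NN.one, MvPolynomial.X_ne_zero _, one_ne_zero, by
    simp [_root_.yvF]⟩

lemma Pos.mul {a b : ClusterField n} (ha : Pos a) (hb : Pos b) : Pos (a * b) := by
  obtain ⟨p, q, h1, h2, h3, h4, rfl⟩ := ha
  obtain ⟨r, s, h5, h6, h7, h8, rfl⟩ := hb
  exact ⟨p * r, q * s, h1.mul h5, h2.mul h6, mul_ne_zero h3 h7, mul_ne_zero h4 h8, by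
    rw [map_mul, map_mul]; exact div_mul_div_comm _ _ _ _⟩

lemma Pos.inv {a : ClusterField n} (ha : Pos a) : Pos a⁻¹ := by
  obtain ⟨p, q, h1, h2, h3, h4, rfl⟩ := ha
  exact ⟨q, p, h2, h1, h4, h3, by rw [inv_div]⟩

lemma Pos.add {a b : ClusterField n} (ha : Pos a) (hb : Pos b) : Pos (a + b) := by
  obtain ⟨p, q, h1, h2, h3, h4, rfl⟩ := ha
  obtain ⟨r, s, h5, h6, h7, h8, rfl⟩ := hb
  refine ⟨p * s + q * r, q * s, (h1.mul h6).add (h2.mul h5), h2.mul h6,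
    NN.add_ne_zero (h1.mul h6) (h2.mul h5) (mul_ne_zero h3 h8), mul_ne_zero h4 h8, ?_⟩
  rw [div_add_div _ _ (amap_ne_zero h4) (amap_ne_zero h8), map_add, map_mul, map_mul, map_mul]

lemma Pos.div {a b : ClusterField n} (ha : Pos a) (hb : Pos b) : Pos (a / b) := by
  rw [div_eq_mul_inv]; exact ha.mul hb.inv

lemma Pos.pow {a : ClusterField n} (ha : Pos a) (e : ℕ) : Pos (a ^ e) := by
  induction e with
  | zero => simpa using Pos.one
  | succ e ih => rw [pow_succ]; exact ih.mul ha

lemma Pos.zpow {a : ClusterField n} (ha : Pos a) (e : ℤ) : Pos (a ^ e) := by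
  rcases le_or_gt 0 e with h|h
  · lift e to ℕ using h; rw [zpow_natCast]; exact ha.pow e
  · rw [← neg_neg e, zpow_neg]
    lift -e to ℕ using (by omega) with m hm
    rw [zpow_natCast]; exact (ha.pow m).inv

lemma Pos.prod {ι : Type*} (s : Finset ι) (f : ι → ClusterField n)
    (h : ∀ i ∈ s, Pos (f i)) : Pos (∏ i ∈ s, f i) := by
  classical
  induction s using Finset.induction with
  | empty => simpa using Pos.one
  | insert _ _ hni ih =>
    rw [Finset.prod_insert hni]
    exact (h _ (Finset.mem_insert_self _ _)).mul (ih fun i hi => h i (Finset.mem_insert_of_mem hi))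

lemma Pos.xpowP (g : Fin n → ℤ) : Pos (xpow g) :=
  Pos.prod _ _ fun i _ => (Pos.xv i).zpow _

/-! ### Injectivity of Laurent monomials in the `x`-variables -/

lemma prodXpow (f : Fin n → ℕ) :
    (∏ i, (MvPolynomial.X (Sum.inl i) : MvPolynomial (Fin n ⊕ Fin n) ℚ) ^ f i) =
      MvPolynomial.monomial (∑ i, Finsupp.single (Sum.inl i) (f i)) 1 := by
  classical
  have : ∀ s : Finset (Fin n),
      (∏ i ∈ s, (MvPolynomial.X (Sum.inl i) : MvPolynomial (Fin n ⊕ Fin n) ℚ) ^ f i) =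
      MvPolynomial.monomial (∑ i ∈ s, Finsupp.single (Sum.inl i) (f i)) 1 := by
    intro s
    induction s using Finset.induction with
    | empty => simp
    | insert _ _ hni ih =>
      rw [Finset.prod_insert hni, Finset.sum_insert hni, ih, MvPolynomial.X_pow_eq_monomial,
        MvPolynomial.monomial_mul, one_mul]
  exact this Finset.univ

lemma natpow_inj (f f' : Fin n → ℕ)
    (hff : (∏ i, xv n i ^ f i) = (∏ i, xv n i ^ f' i)) : f = f' := by
  have : (algebraMap (MvPolynomial (Fin n ⊕ Fin n) ℚ) (ClusterField n))
      (∏ i, MvPolynomial.X (Sum.inl i) ^ f i) =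
      (algebraMap (MvPolynomial (Fin n ⊕ Fin n) ℚ) (ClusterField n))
      (∏ i, MvPolynomial.X (Sum.inl i) ^ f' i) := by
    rw [map_prod, map_prod]
    simpa [_root_.xv, map_pow] using hff
  have hpp := amap_inj this
  rw [prodXpow, prodXpow] at hpp
  rcases (MvPolynomial.monomial_eq_monomial_iff _ _ _ _).mp hpp with h1 | h1
  · funext i
    have := DFunLike.congr_fun h1.1 (Sum.inl i)
    simpa [Finsupp.finset_sum_apply, Finsupp.single_apply, Sum.inl.injEq,
      Finset.sum_ite_eq'] using this
  · exact absurd h1.1 one_ne_zero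

lemma xpow_mul_neg (g : Fin n → ℤ) :
    xpow g * (∏ i, xv n i ^ (-(g i)).toNat) = ∏ i, xv n i ^ (g i).toNat := by
  rw [xpow, ← Finset.prod_mul_distrib]
  refine Finset.prod_congr rfl fun i _ => ?_
  rw [← zpow_natCast (xv n i) (-(g i)).toNat, ← zpow_add₀ (xv_ne_zero i),
    ← zpow_natCast (xv n i) (g i).toNat]
  congr 1
  omega

lemma xpow_inj {g h : Fin n → ℤ} (he : xpow g = xpow h) : g = h := by
  have h0 : (∏ i, xv n i ^ ((g i).toNat + (-(h i)).toNat)) =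
      ∏ i, xv n i ^ ((h i).toNat + (-(g i)).toNat) := by
    simp only [pow_add, Finset.prod_mul_distrib]
    rw [← xpow_mul_neg g, ← xpow_mul_neg h, he]
    ring
  have h2 := congrFun (natpow_inj _ _ h0)
  funext i
  have := h2 i
  omega

/-! ### Integer matrix mutation combinatorics -/

lemma sgnmax (a b : ℤ) :
    Int.sign a * max (a * b) 0 = (a.toNat : ℤ) * b.toNat - ((-a).toNat : ℤ) * (-b).toNat := by
  rcases lt_trichotomy a 0 with ha|rfl|ha <;> rcases lt_trichotomy b 0 with hb|rfl|hb <;>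
    simp_all [Int.sign_eq_neg_one_of_neg, Int.sign_eq_one_of_pos, Int.toNat_of_nonneg,
      Int.toNat_of_nonpos]
  · rw [max_eq_left (by nlinarith), max_eq_right ha.le, max_eq_right hb.le,
      max_eq_left (by linarith), max_eq_left (by linarith)]; ring
  · rw [max_eq_right (by nlinarith), max_eq_right ha.le, max_eq_left hb.le,
      max_eq_left (by linarith), max_eq_right (by linarith)]; ring
  · rw [max_eq_right (by nlinarith), max_eq_left ha.le, max_eq_right hb.le,
      max_eq_right (by linarith), max_eq_left (by linarith)]; ring
  · rw [max_eq_left (by nlinarith), max_eq_left ha.le, max_eq_left hb.le,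
      max_eq_right (by linarith), max_eq_right (by linarith)]; ring

lemma t_pos_mul (c x : ℤ) (hc : 0 ≤ c) : (((c * x).toNat : ℤ)) = c * x.toNat := by
  rcases le_or_gt 0 x with h|h
  · rw [Int.toNat_of_nonneg (mul_nonneg hc h), Int.toNat_of_nonneg h]
  · rw [Int.toNat_of_nonpos (mul_nonpos_of_nonneg_of_nonpos hc h.le),
      Int.toNat_of_nonpos h.le]; simp

def Skew (d : Fin n → ℤ) (B : Matrix (Fin n ⊕ Fin n) (Fin n) ℤ) : Prop :=
  ∀ i j, d i * B (Sum.inl i) j = -(d j * B (Sum.inl j) i)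

lemma Skew.diag {d : Fin n → ℤ} {B} (hs : Skew d B) (hd : ∀ i, 0 < d i) (k : Fin n) :
    B (Sum.inl k) k = 0 := by
  have := hs k k
  have hdk := (hd k).ne'
  rcases mul_eq_zero.mp (show d k * B (Sum.inl k) k = 0 by linarith) with h|h
  · exact absurd h hdk
  · exact h

lemma mut_off {B : Matrix (Fin n ⊕ Fin n) (Fin n) ℤ} {k : Fin n} {i : Fin n ⊕ Fin n} {j : Fin n}
    (hi : i ≠ Sum.inl k) (hj : j ≠ k) :
    matMut B k i j = B i j + ((B i k).toNat : ℤ) * ((B (Sum.inl k) j).toNat : ℤ)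
      - ((-(B i k)).toNat : ℤ) * ((-(B (Sum.inl k) j)).toNat : ℤ) := by
  rw [matMut, Matrix.of_apply, if_neg (by tauto), sgnmax]; ring

lemma mut_k {B : Matrix (Fin n ⊕ Fin n) (Fin n) ℤ} {k : Fin n} {i : Fin n ⊕ Fin n} {j : Fin n}
    (h : i = Sum.inl k ∨ j = k) : matMut B k i j = -B i j := by
  rw [matMut, Matrix.of_apply, if_pos h]

lemma Skew.mut {d : Fin n → ℤ} {B} (hs : Skew d B) (hd : ∀ i, 0 < d i) (k : Fin n) :
    Skew d (matMut B k) := by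
  intro i j
  by_cases hik : i = k
  · subst hik
    rw [mut_k (Or.inl rfl), mut_k (Or.inr rfl)]
    ring_nf
    linarith [hs i j]
  · by_cases hjk : j = k
    · subst hjk
      rw [mut_k (Or.inr rfl), mut_k (Or.inl (by simp))]
      linarith [hs i j]
    · rw [mut_off (by simp [hik]) hjk, mut_off (by simp [hjk]) hik]
      refine mul_left_cancel₀ (hd k).ne' ?_
      have hA : d i * ((B (Sum.inl i) k).toNat : ℤ) = d k * ((-(B (Sum.inl k) i)).toNat : ℤ) := by
        rw [← t_pos_mul _ _ (hd i).le, hs i k, neg_mul_eq_mul_neg, t_pos_mul _ _ (hd k).le]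
      have hB : d i * ((-(B (Sum.inl i) k)).toNat : ℤ) = d k * ((B (Sum.inl k) i).toNat : ℤ) := by
        rw [← t_pos_mul _ _ (hd i).le, ← neg_mul_eq_mul_neg, hs i k, neg_neg,
          t_pos_mul _ _ (hd k).le]
      have hC : d k * ((B (Sum.inl k) j).toNat : ℤ) = d j * ((-(B (Sum.inl j) k)).toNat : ℤ) := by
        rw [← t_pos_mul _ _ (hd k).le, hs k j, neg_mul_eq_mul_neg, t_pos_mul _ _ (hd j).le]
      have hD : d k * ((-(B (Sum.inl k) j)).toNat : ℤ) = d j * ((B (Sum.inl j) k).toNat : ℤ) := by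
        rw [← t_pos_mul _ _ (hd k).le, ← neg_mul_eq_mul_neg, hs k j, neg_neg,
          t_pos_mul _ _ (hd j).le]
      have h0 := hs i j
      linear_combination (d k) * h0 + (d k * ((B (Sum.inl k) j).toNat : ℤ)) * hA
        + (d k * ((-(B (Sum.inl k) i)).toNat : ℤ)) * hC
        - (d k * ((-(B (Sum.inl k) j)).toNat : ℤ)) * hB
        - (d k * ((B (Sum.inl k) i).toNat : ℤ)) * hD

def GRel (B0 : Matrix (Fin n) (Fin n) ℤ) (B : Matrix (Fin n ⊕ Fin n) (Fin n) ℤ)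
    (G : Fin n → Fin n → ℤ) : Prop :=
  ∀ m k, (∑ i, G i m * B (Sum.inl i) k) = ∑ j, B0 m j * B (Sum.inr j) k

def Gmut (B0 : Matrix (Fin n) (Fin n) ℤ) (B : Matrix (Fin n ⊕ Fin n) (Fin n) ℤ)
    (G : Fin n → Fin n → ℤ) (k : Fin n) : Fin n → Fin n → ℤ :=
  fun l m =>
    if l = k then
      (∑ i, ((B (Sum.inl i) k).toNat : ℤ) * G i m)
        - (∑ j, ((B (Sum.inr j) k).toNat : ℤ) * B0 m j) - G k m
    else G l m

lemma grel_toNat {B0 : Matrix (Fin n) (Fin n) ℤ} {B : Matrix (Fin n ⊕ Fin n) (Fin n) ℤ}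
    {G : Fin n → Fin n → ℤ} (hg : GRel B0 B G) (m k : Fin n) :
    (∑ i, ((B (Sum.inl i) k).toNat : ℤ) * G i m)
      - (∑ i, ((-(B (Sum.inl i) k)).toNat : ℤ) * G i m)
    = (∑ j, ((B (Sum.inr j) k).toNat : ℤ) * B0 m j)
      - (∑ j, ((-(B (Sum.inr j) k)).toNat : ℤ) * B0 m j) := by
  rw [← Finset.sum_sub_distrib, ← Finset.sum_sub_distrib]
  have e1 : ∀ i : Fin n, ((B (Sum.inl i) k).toNat : ℤ) * G i m
      - ((-(B (Sum.inl i) k)).toNat : ℤ) * G i m = G i m * B (Sum.inl i) k := by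
    intro i
    have := Int.toNat_sub_toNat_neg (B (Sum.inl i) k)
    linear_combination G i m * this
  have e2 : ∀ l : Fin n, ((B (Sum.inr l) k).toNat : ℤ) * B0 m l
      - ((-(B (Sum.inr l) k)).toNat : ℤ) * B0 m l = B0 m l * B (Sum.inr l) k := by
    intro l
    have := Int.toNat_sub_toNat_neg (B (Sum.inr l) k)
    linear_combination B0 m l * this
  rw [Finset.sum_congr rfl fun i _ => e1 i, Finset.sum_congr rfl fun l _ => e2 l]
  exact hg m k

lemma GRel.mut {B0 : Matrix (Fin n) (Fin n) ℤ} {B : Matrix (Fin n ⊕ Fin n) (Fin n) ℤ}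
    {G : Fin n → Fin n → ℤ} {d : Fin n → ℤ} (hd : ∀ i, 0 < d i) (hs : Skew d B)
    (hg : GRel B0 B G) (k : Fin n) : GRel B0 (matMut B k) (Gmut B0 B G k) := by
  intro m j
  by_cases hjk : j = k
  · subst hjk
    have hak : B (Sum.inl j) j = 0 := hs.diag hd j
    have L : ∀ i : Fin n, Gmut B0 B G j i m * matMut B j (Sum.inl i) j
        = G i m * (-(B (Sum.inl i) j)) := by
      intro i
      rw [mut_k (Or.inr rfl)]
      by_cases hik : i = j
      · subst hik; rw [hak]; simp
      · rw [Gmut, if_neg hik]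
    rw [Finset.sum_congr rfl fun i _ => L i,
      Finset.sum_congr rfl fun l _ => congrArg (B0 m l * ·) (mut_k (B := B) (Or.inr rfl))]
    simp only [mul_neg, Finset.sum_neg_distrib]
    rw [hg m j]
  · have hak : B (Sum.inl k) k = 0 := hs.diag hd k
    set Vp := ∑ i, ((B (Sum.inl i) k).toNat : ℤ) * G i m with hVp
    set Vm := ∑ i, ((-(B (Sum.inl i) k)).toNat : ℤ) * G i m with hVm
    set Wp := ∑ l, ((B (Sum.inr l) k).toNat : ℤ) * B0 m l with hWp
    set Wm := ∑ l, ((-(B (Sum.inr l) k)).toNat : ℤ) * B0 m l with hWm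
    have hV : Vp - Vm = Wp - Wm := grel_toNat hg m k
    have huj := Int.toNat_sub_toNat_neg (B (Sum.inl k) j)
    set P := ((B (Sum.inl k) j).toNat : ℤ) with hP
    set Q := ((-(B (Sum.inl k) j)).toNat : ℤ) with hQ
    have L : ∀ i : Fin n, Gmut B0 B G k i m * matMut B k (Sum.inl i) j
        = G i m * B (Sum.inl i) j
          + (((B (Sum.inl i) k).toNat : ℤ) * G i m) * P
          - (((-(B (Sum.inl i) k)).toNat : ℤ) * G i m) * Q
          + (if i = k then -(Vp - Wp) * B (Sum.inl k) j else 0) := by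
      intro i
      by_cases hik : i = k
      · subst hik
        rw [mut_k (Or.inl rfl), Gmut, if_pos rfl, if_pos rfl, hak, ← hVp, ← hWp]
        simp only [Int.toNat_zero, Int.natCast_zero, neg_zero, zero_mul]
        ring
      · rw [Gmut, if_neg hik, if_neg hik, mut_off (by simpa using hik) hjk]
        ring
    rw [Finset.sum_congr rfl fun i _ => L i]
    have R : ∀ l : Fin n, B0 m l * matMut B k (Sum.inr l) j
        = B0 m l * B (Sum.inr l) j
          + (((B (Sum.inr l) k).toNat : ℤ) * B0 m l) * P
          - (((-(B (Sum.inr l) k)).toNat : ℤ) * B0 m l) * Q := by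
      intro l
      rw [mut_off (by simp) hjk]
      ring
    rw [Finset.sum_congr rfl fun l _ => R l]
    simp only [Finset.sum_add_distrib, Finset.sum_sub_distrib, ← Finset.sum_mul,
      Finset.sum_ite_eq' Finset.univ k, Finset.mem_univ, if_pos]
    rw [← hVp, ← hVm, ← hWp, ← hWm]
    have h1 := hg m j
    linear_combination h1 + Q * hV + (Vp - Wp) * huj

/-! ### The field computation -/

lemma prodX_eq (X H : Fin n → ClusterField n) (G : Fin n → Fin n → ℤ)
    (hX : ∀ l, X l = xpow (G l) * H l) (e : Fin n → ℕ) :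
    ∏ i, X i ^ e i = xpow (fun m => ∑ i, (e i : ℤ) * G i m) * ∏ i, H i ^ e i := by
  rw [Finset.prod_congr rfl fun i (_ : i ∈ Finset.univ) => by rw [hX i, mul_pow],
    Finset.prod_mul_distrib]
  congr 1
  rw [Finset.prod_congr rfl fun i (_ : i ∈ Finset.univ) => xpow_pow (G i) (e i),
    ← xpow_sum]

lemma yhat_eq (B0 : Matrix (Fin n) (Fin n) ℤ) (j : Fin n) :
    yhat B0 j = yvF n j * xpow (fun i => B0 i j) := rfl

lemma prodYhat_eq (B0 : Matrix (Fin n) (Fin n) ℤ) (e : Fin n → ℕ) :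
    ∏ j, yhat B0 j ^ e j
      = xpow (fun m => ∑ j, (e j : ℤ) * B0 m j) * ∏ j, yvF n j ^ e j := by
  rw [Finset.prod_congr rfl fun j (_ : j ∈ Finset.univ) => by
      rw [yhat_eq, mul_pow, xpow_pow], Finset.prod_mul_distrib]
  rw [← xpow_sum]
  ring

lemma Pos.yhat (B0 : Matrix (Fin n) (Fin n) ℤ) (j : Fin n) : Pos (yhat B0 j) :=
  (Pos.yvF j).mul (Pos.prod _ _ fun i _ => (Pos.xv i).zpow _)

lemma Xstep_self {B : Matrix (Fin n ⊕ Fin n) (Fin n) ℤ} (X : Fin n → ClusterField n)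
    (k : Fin n) :
    Xstep B X k k =
      ((∏ j, yvF n j ^ (B (Sum.inr j) k).toNat) * (∏ i, X i ^ (B (Sum.inl i) k).toNat)
        + (∏ j, yvF n j ^ (-(B (Sum.inr j) k)).toNat) *
            (∏ i, X i ^ (-(B (Sum.inl i) k)).toNat)) / X k := by
  simp [Xstep]

lemma Xstep_ne {B : Matrix (Fin n ⊕ Fin n) (Fin n) ℤ} (X : Fin n → ClusterField n)
    {k l : Fin n} (h : l ≠ k) : Xstep B X k l = X l := by
  simp [Xstep, h]

lemma FhatStep_self {B0 : Matrix (Fin n) (Fin n) ℤ} {B : Matrix (Fin n ⊕ Fin n) (Fin n) ℤ}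
    (H : Fin n → ClusterField n) (k : Fin n) :
    FhatStep B0 B H k k =
      ((∏ j, yhat B0 j ^ (B (Sum.inr j) k).toNat) * (∏ i, H i ^ (B (Sum.inl i) k).toNat)
        + (∏ j, yhat B0 j ^ (-(B (Sum.inr j) k)).toNat) *
            (∏ i, H i ^ (-(B (Sum.inl i) k)).toNat)) / H k := by
  simp [FhatStep]

lemma FhatStep_ne {B0 : Matrix (Fin n) (Fin n) ℤ} {B : Matrix (Fin n ⊕ Fin n) (Fin n) ℤ}
    (H : Fin n → ClusterField n) {k l : Fin n} (h : l ≠ k) : FhatStep B0 B H k l = H l := by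
  simp [FhatStep, h]

lemma Gmut_self {B0 : Matrix (Fin n) (Fin n) ℤ} {B : Matrix (Fin n ⊕ Fin n) (Fin n) ℤ}
    (G : Fin n → Fin n → ℤ) (k : Fin n) :
    Gmut B0 B G k k = fun m =>
      (∑ i, ((B (Sum.inl i) k).toNat : ℤ) * G i m)
        - (∑ j, ((B (Sum.inr j) k).toNat : ℤ) * B0 m j) - G k m := by
  funext m; simp [Gmut]

lemma Gmut_ne {B0 : Matrix (Fin n) (Fin n) ℤ} {B : Matrix (Fin n ⊕ Fin n) (Fin n) ℤ}
    (G : Fin n → Fin n → ℤ) {k l : Fin n} (h : l ≠ k) : Gmut B0 B G k l = G l := by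
  funext m; simp [Gmut, h]

structure CInv (d : Fin n → ℤ) (B0 : Matrix (Fin n) (Fin n) ℤ)
    (B : Matrix (Fin n ⊕ Fin n) (Fin n) ℤ) (X H : Fin n → ClusterField n)
    (G : Fin n → Fin n → ℤ) : Prop where
  skew : Skew d B
  grel : GRel B0 B G
  hX : ∀ l, X l = xpow (G l) * H l
  hH : ∀ l, Pos (H l)

lemma CInv.step {d : Fin n → ℤ} {B0 : Matrix (Fin n) (Fin n) ℤ}
    {B : Matrix (Fin n ⊕ Fin n) (Fin n) ℤ} {X H : Fin n → ClusterField n}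
    {G : Fin n → Fin n → ℤ} (hd : ∀ i, 0 < d i)
    (hI : CInv d B0 B X H G) (k : Fin n) :
    CInv d B0 (matMut B k) (Xstep B X k) (FhatStep B0 B H k) (Gmut B0 B G k) := by
  refine ⟨hI.skew.mut hd k, GRel.mut hd hI.skew hI.grel k, ?_, ?_⟩
  · intro l
    by_cases hlk : l = k
    · subst hlk
      have hH0 : H l ≠ 0 := (hI.hH l).ne_zero
      have hx0 : xpow (G l) ≠ 0 := xpow_ne_zero _
      rw [Xstep_self X l, FhatStep_self H l,
        prodX_eq X H G hI.hX (fun i => (B (Sum.inl i) l).toNat),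
        prodX_eq X H G hI.hX (fun i => (-(B (Sum.inl i) l)).toNat),
        prodYhat_eq B0 (fun j => (B (Sum.inr j) l).toNat),
        prodYhat_eq B0 (fun j => (-(B (Sum.inr j) l)).toNat),
        hI.hX l, Gmut_self G l]
      set vP : Fin n → ℤ := fun m => ∑ i, (((B (Sum.inl i) l).toNat : ℕ) : ℤ) * G i m with hvP
      set vM : Fin n → ℤ := fun m => ∑ i, (((-(B (Sum.inl i) l)).toNat : ℕ) : ℤ) * G i m with hvM
      set wP : Fin n → ℤ := fun m => ∑ j, (((B (Sum.inr j) l).toNat : ℕ) : ℤ) * B0 m j with hwP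
      set wM : Fin n → ℤ := fun m => ∑ j, (((-(B (Sum.inr j) l)).toNat : ℕ) : ℤ) * B0 m j with hwM
      have hE : ∀ m, vP m - wP m = vM m - wM m := by
        intro m
        have h2 := grel_toNat hI.grel m l
        have e1 : vP m - vM m = wP m - wM m := by
          rw [hvP, hvM, hwP, hwM]
          exact h2
        linarith
      have hv1 : xpow vP = xpow (fun m => vP m - wP m) * xpow wP := by
        rw [← xpow_funadd]; congr 1; funext m; ring
      have hv2 : xpow vM = xpow (fun m => vP m - wP m) * xpow wM := by
        rw [← xpow_funadd]; congr 1; funext m; rw [hE m]; ring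
      have hgk : (fun m =>
          (∑ i, ((B (Sum.inl i) l).toNat : ℤ) * G i m)
            - (∑ j, ((B (Sum.inr j) l).toNat : ℤ) * B0 m j) - G l m)
          = fun m => (vP m - wP m) - G l m := by
        funext m; rw [hvP, hwP]
      rw [hgk, hv1, hv2, xpow_funsub (fun m => vP m - wP m) (G l)]
      field_simp
    · rw [Xstep_ne X hlk, FhatStep_ne H hlk, Gmut_ne G hlk]
      exact hI.hX l
  · intro l
    by_cases hlk : l = k
    · subst hlk
      rw [FhatStep_self H l]
      exact Pos.div
        ((Pos.mul (Pos.prod _ _ fun j _ => (Pos.yhat B0 j).pow _)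
            (Pos.prod _ _ fun i _ => (hI.hH i).pow _)).add
          (Pos.mul (Pos.prod _ _ fun j _ => (Pos.yhat B0 j).pow _)
            (Pos.prod _ _ fun i _ => (hI.hH i).pow _)))
        (hI.hH l)
    · rw [FhatStep_ne H hlk]
      exact hI.hH l

lemma fold_pair {d : Fin n → ℤ} {B0 : Matrix (Fin n) (Fin n) ℤ} (hd : ∀ i, 0 < d i)
    (w : List (Fin n)) :
    ∀ (B : Matrix (Fin n ⊕ Fin n) (Fin n) ℤ) (X H : Fin n → ClusterField n)
      (G : Fin n → Fin n → ℤ), CInv d B0 B X H G →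
    ∃ G', CInv d B0
      (w.foldl (fun p k => (matMut p.1 k, Xstep p.1 p.2 k)) (B, X)).1
      (w.foldl (fun p k => (matMut p.1 k, Xstep p.1 p.2 k)) (B, X)).2
      (w.foldl (fun p k => (matMut p.1 k, FhatStep B0 p.1 p.2 k)) (B, H)).2 G' := by
  induction w with
  | nil => intro B X H G h; exact ⟨G, h⟩
  | cons k w ih =>
    intro B X H G h
    rw [List.foldl_cons, List.foldl_cons]
    exact ih (matMut B k) (Xstep B X k) (FhatStep B0 B H k) (Gmut B0 B G k) (h.step hd k)

end Aux

/-- For every `w` and `ℓ` there is a unique `g ∈ ℤⁿ` with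
`X_{ℓ;w} = x₁^{g₁} ⋯ xₙ^{gₙ} · F_{ℓ;w}(ŷ₁,…,ŷₙ)`. -/
theorem exists_unique_g_vector (n : ℕ) (hn : 1 ≤ n)
    (B0 : Matrix (Fin n) (Fin n) ℤ)
    (d : Fin n → ℤ) (hd : ∀ i, 0 < d i)
    (hskew : ∀ i j, d i * B0 i j = -(d j * B0 j i)) :
    ∀ (w : List (Fin n)) (l : Fin n),
      ∃! g : Fin n → ℤ,
        Xvar B0 w l = (∏ i, xv n i ^ g i) * Fhat B0 w l := by
  intro w l
  have hbase : CInv d B0 (initB B0) (fun l => xv n l) (fun _ => 1)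
      (fun l m => if l = m then 1 else 0) := by
    refine ⟨?_, ?_, ?_, fun _ => Pos.one⟩
    · intro i j
      exact hskew i j
    · intro m k
      simp only [initB, Matrix.of_apply]
      simp [ite_mul, mul_ite, mul_zero, zero_mul, one_mul, mul_one,
        Finset.sum_ite_eq', Finset.sum_ite_eq]
    · intro l
      rw [mul_one, xpow]
      rw [Finset.prod_eq_single l (fun b _ hb => by
        rw [if_neg (Ne.symm hb), zpow_zero]) (fun h => absurd (Finset.mem_univ l) h)]
      rw [if_pos rfl, zpow_one]
  obtain ⟨G', hinv⟩ := fold_pair hd w (initB B0) (fun l => xv n l) (fun _ => 1)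
    (fun l m => if l = m then 1 else 0) hbase
  have hex : Xvar B0 w l = xpow (G' l) * Fhat B0 w l := hinv.hX l
  have hFne : Fhat B0 w l ≠ 0 := (hinv.hH l).ne_zero
  refine ⟨G' l, hex, fun g' hg' => ?_⟩
  have h2 : xpow g' * Fhat B0 w l = xpow (G' l) * Fhat B0 w l := by
    rw [← hex]
    exact hg'.symm
  exact xpow_inj (mul_right_cancel₀ hFne h2)

end
end
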